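/- Let ε ∈ (0,1), δ ∈ (0,1), Δ > 0, and σ ≥ √(2·ln(1.25/δ))·Δ/ε. Let x, x' ∈ ℝ with |x − x'| ≤ Δ. Then the Gaussian measure N(x, σ²) assigns measure at most δ to the privacy-loss event {z ∈ ℝ : exp(−(z−x)²/(2σ²)) > exp(ε)·exp(−(z−x')²/(2σ²))}. -/

import Mathlib

open MeasureTheory ProbabilityTheory

namespace GaussTailAux

open Real

lemma var_ne_zero {σ : ℝ} (hσ : 0 < σ) : ((σ^2).toNNReal) ≠ 0 :=
  (Real.toNNReal_pos.mpr (by positivity)).ne'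

lemma reflect_map (m : ℝ) (v : NNReal) :
    Measure.map (fun z : ℝ => 2*m - z) (gaussianReal m v) = gaussianReal m v := by
  have h1 : (fun z : ℝ => 2*m - z) = (fun z => z + 2*m) ∘ (fun z => (-1 : ℝ) * z) := by
    funext z; simp; ring
  rw [h1, ← Measure.map_map (by fun_prop) (by fun_prop), gaussianReal_map_const_mul,
    gaussianReal_map_add_const]
  congr 1
  · ring
  · have h2 : (⟨(-1:ℝ)^2, sq_nonneg _⟩ : NNReal) = 1 := by
      ext; norm_num
    ext; simp

lemma gauss_Iio_eq_Ioi (m t : ℝ) (v : NNReal) :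
    gaussianReal m v (Set.Iio t) = gaussianReal m v (Set.Ioi (2*m - t)) := by
  conv_lhs => rw [← reflect_map m v]
  rw [Measure.map_apply (by fun_prop) measurableSet_Iio]
  congr 1
  ext z
  simp only [Set.mem_preimage, Set.mem_Iio, Set.mem_Ioi]
  constructor <;> intro h <;> linarith

lemma gauss_Ioi_self (c : ℝ) (v : NNReal) (hv : v ≠ 0) :
    gaussianReal c v (Set.Ioi c) = 1/2 := by
  have hsym : gaussianReal c v (Set.Iio c) = gaussianReal c v (Set.Ioi c) := by
    rw [gauss_Iio_eq_Ioi, show 2*c - c = c from by ring]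
  have hsing : gaussianReal c v {c} = 0 :=
    gaussianReal_absolutelyContinuous c hv (volume_singleton)
  have hIic : gaussianReal c v (Set.Iic c) = gaussianReal c v (Set.Iio c) := by
    rw [← Set.Iio_union_right, measure_union (by simp) (measurableSet_singleton c), hsing,
      add_zero]
  have huniv : gaussianReal c v (Set.Iic c) + gaussianReal c v (Set.Ioi c) = 1 := by
    rw [← measure_union (Set.Iic_disjoint_Ioi le_rfl) measurableSet_Ioi, Set.Iic_union_Ioi,
      measure_univ]
  rw [hIic, hsym] at huniv
  rw [ENNReal.eq_div_iff (by norm_num) (by norm_num), two_mul, huniv]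

lemma pdf_shift_le (m σ s : ℝ) (hσ : 0 < σ) (hs : 0 ≤ s) {z : ℝ} (hz : m + σ*s ≤ z) :
    gaussianPDFReal m ((σ^2).toNNReal) z
      ≤ Real.exp (-s^2/2) * gaussianPDFReal (m + σ*s) ((σ^2).toNNReal) z := by
  have hvr : (((σ^2).toNNReal : NNReal) : ℝ) = σ^2 := Real.coe_toNNReal _ (sq_nonneg σ)
  unfold gaussianPDFReal
  rw [hvr]
  have hmain : Real.exp (-(z - m)^2/(2*σ^2))
      ≤ Real.exp (-s^2/2) * Real.exp (-(z - (m + σ*s))^2/(2*σ^2)) := by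
    rw [← Real.exp_add, Real.exp_le_exp]
    have h2 : (0:ℝ) < 2*σ^2 := by positivity
    have h1 : -s^2/2 + -(z - (m + σ*s))^2/(2*σ^2)
        = (-(σ^2*s^2) + -(z - (m + σ*s))^2) / (2*σ^2) := by
      field_simp
    rw [h1, div_le_div_iff_of_pos_right h2]
    nlinarith [mul_nonneg (mul_nonneg hσ.le hs) (sub_nonneg.2 hz)]
  calc (Real.sqrt (2*π*σ^2))⁻¹ * Real.exp (-(z - m)^2/(2*σ^2))
      ≤ (Real.sqrt (2*π*σ^2))⁻¹
          * (Real.exp (-s^2/2) * Real.exp (-(z - (m + σ*s))^2/(2*σ^2))) :=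
        mul_le_mul_of_nonneg_left hmain (by positivity)
    _ = Real.exp (-s^2/2) * ((Real.sqrt (2*π*σ^2))⁻¹
          * Real.exp (-(z - (m + σ*s))^2/(2*σ^2))) := by ring

lemma ofReal_half : (1/2 : ENNReal) = ENNReal.ofReal (1/2) := by
  rw [ENNReal.ofReal_div_of_pos (by norm_num)]
  norm_num

lemma lemA (m σ s : ℝ) (hσ : 0 < σ) (hs : 0 ≤ s) :
    gaussianReal m ((σ^2).toNNReal) (Set.Ioi (m + σ*s))
      ≤ ENNReal.ofReal (Real.exp (-s^2/2) / 2) := by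
  have hv := var_ne_zero hσ
  calc gaussianReal m ((σ^2).toNNReal) (Set.Ioi (m + σ*s))
      = ∫⁻ z in Set.Ioi (m + σ*s), gaussianPDF m ((σ^2).toNNReal) z :=
        gaussianReal_apply m hv _
    _ ≤ ∫⁻ z in Set.Ioi (m + σ*s),
          ENNReal.ofReal (Real.exp (-s^2/2)) * gaussianPDF (m + σ*s) ((σ^2).toNNReal) z := by
        refine setLIntegral_mono ((measurable_gaussianPDF _ _).const_mul _) fun z hz => ?_
        rw [gaussianPDF, gaussianPDF, ← ENNReal.ofReal_mul (Real.exp_nonneg _)]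
        exact ENNReal.ofReal_le_ofReal (pdf_shift_le m σ s hσ hs (le_of_lt hz))
    _ = ENNReal.ofReal (Real.exp (-s^2/2))
          * gaussianReal (m + σ*s) ((σ^2).toNNReal) (Set.Ioi (m + σ*s)) := by
        rw [lintegral_const_mul _ (measurable_gaussianPDF _ _), ← gaussianReal_apply _ hv]
    _ = ENNReal.ofReal (Real.exp (-s^2/2)) * ENNReal.ofReal (1/2) := by
        rw [gauss_Ioi_self _ _ hv, ofReal_half]
    _ = ENNReal.ofReal (Real.exp (-s^2/2) / 2) := by
        rw [← ENNReal.ofReal_mul (Real.exp_nonneg _), mul_one_div]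

lemma lemB (m σ s : ℝ) (hσ : 0 < σ) (hs : s ≤ 0) :
    gaussianReal m ((σ^2).toNNReal) (Set.Ioi (m + σ*s))
      ≤ ENNReal.ofReal (1/2 + (-s)/(5/2)) := by
  have hv := var_ne_zero hσ
  have hvr : (((σ^2).toNNReal : NNReal) : ℝ) = σ^2 := Real.coe_toNNReal _ (sq_nonneg σ)
  have hsplit : Set.Ioi (m + σ*s) ⊆ Set.Ioc (m + σ*s) m ∪ Set.Ioi m := by
    intro z hz
    rcases le_or_gt z m with h | h
    · exact Or.inl ⟨hz, h⟩
    · exact Or.inr h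
  have hsqrt : Real.sqrt (2*π*σ^2) = Real.sqrt (2*π) * σ := by
    rw [show 2*π*σ^2 = (2*π)*σ^2 from by ring, Real.sqrt_mul (by positivity),
      Real.sqrt_sq hσ.le]
  have hpi : (157/50 : ℝ) < π := lt_of_le_of_lt (by norm_num) Real.pi_gt_d2
  have hsqrt25 : ((5:ℝ)/2) ≤ Real.sqrt (2*π) := by
    rw [Real.le_sqrt (by norm_num) (by positivity)]
    nlinarith [hpi]
  have hIoc : gaussianReal m ((σ^2).toNNReal) (Set.Ioc (m + σ*s) m)
      ≤ ENNReal.ofReal ((-s)/(5/2)) := by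
    calc gaussianReal m ((σ^2).toNNReal) (Set.Ioc (m + σ*s) m)
        = ∫⁻ z in Set.Ioc (m + σ*s) m, gaussianPDF m ((σ^2).toNNReal) z :=
          gaussianReal_apply m hv _
      _ ≤ ∫⁻ _ in Set.Ioc (m + σ*s) m, ENNReal.ofReal ((Real.sqrt (2*π*σ^2))⁻¹) := by
          refine setLIntegral_mono measurable_const fun z _ => ?_
          refine ENNReal.ofReal_le_ofReal ?_
          unfold gaussianPDFReal
          rw [hvr]
          calc (Real.sqrt (2*π*σ^2))⁻¹ * Real.exp (-(z - m)^2/(2*σ^2))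
              ≤ (Real.sqrt (2*π*σ^2))⁻¹ * 1 := by
                refine mul_le_mul_of_nonneg_left ?_ (by positivity)
                rw [Real.exp_le_one_iff]
                have h2 : (0:ℝ) < 2*σ^2 := by positivity
                apply div_nonpos_of_nonpos_of_nonneg <;> nlinarith [sq_nonneg (z - m)]
            _ = (Real.sqrt (2*π*σ^2))⁻¹ := mul_one _
      _ = ENNReal.ofReal ((Real.sqrt (2*π*σ^2))⁻¹) * volume (Set.Ioc (m + σ*s) m) :=
          setLIntegral_const _ _
      _ = ENNReal.ofReal ((Real.sqrt (2*π*σ^2))⁻¹ * (σ * (-s))) := by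
          rw [Real.volume_Ioc, ← ENNReal.ofReal_mul (by positivity)]
          congr 1
          ring
      _ ≤ ENNReal.ofReal ((-s)/(5/2)) := by
          refine ENNReal.ofReal_le_ofReal ?_
          rw [hsqrt, mul_inv]
          have h1 : (Real.sqrt (2*π))⁻¹ * σ⁻¹ * (σ * (-s)) = (-s) / Real.sqrt (2*π) := by
            field_simp
          rw [h1]
          apply div_le_div_of_nonneg_left (by linarith) (by norm_num) hsqrt25
  calc gaussianReal m ((σ^2).toNNReal) (Set.Ioi (m + σ*s))
      ≤ gaussianReal m ((σ^2).toNNReal) (Set.Ioc (m + σ*s) m ∪ Set.Ioi m) :=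
        measure_mono hsplit
    _ ≤ gaussianReal m ((σ^2).toNNReal) (Set.Ioc (m + σ*s) m)
        + gaussianReal m ((σ^2).toNNReal) (Set.Ioi m) := measure_union_le _ _
    _ ≤ ENNReal.ofReal ((-s)/(5/2)) + ENNReal.ofReal (1/2) := by
        refine add_le_add hIoc ?_
        rw [gauss_Ioi_self _ _ hv, ofReal_half]
    _ = ENNReal.ofReal (1/2 + (-s)/(5/2)) := by
        rw [← ENNReal.ofReal_add (div_nonneg (by linarith) (by norm_num)) (by norm_num), add_comm]

lemma exp_one_lt : Real.exp 1 < 272/100 :=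
  lt_of_lt_of_le Real.exp_one_lt_d9 (by norm_num)

lemma exp_half_le : Real.exp (1/2 : ℝ) ≤ 5/2 := by
  have h : Real.exp (1/2 : ℝ) ^ 2 = Real.exp 1 := by
    rw [← Real.exp_nat_mul]
    norm_num
  nlinarith [exp_one_lt, Real.exp_pos (1/2 : ℝ), sq_nonneg (Real.exp (1/2:ℝ) - 5/2)]

lemma exp_quarter_le : Real.exp (1/4 : ℝ) ≤ 4/3 := by
  have h : Real.exp (1/4 : ℝ) ^ 4 = Real.exp 1 := by
    rw [← Real.exp_nat_mul]
    norm_num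
  by_contra hcon
  push_neg at hcon
  have h2 : ((4:ℝ)/3) ^ 4 ≤ Real.exp (1/4 : ℝ) ^ 4 :=
    pow_le_pow_left₀ (by norm_num) hcon.le 4
  rw [h] at h2
  have h3 : (256/81 : ℝ) ≤ Real.exp 1 := le_trans (by norm_num) h2
  linarith [exp_one_lt]

lemma log_54 : (1/5 : ℝ) ≤ Real.log (5/4) := by
  rw [Real.le_log_iff_exp_le (by norm_num)]
  have h : Real.exp (1/5 : ℝ) ^ 5 = Real.exp 1 := by
    rw [← Real.exp_nat_mul]
    norm_num
  by_contra hcon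
  push_neg at hcon
  have h2 : ((5:ℝ)/4) ^ 5 ≤ Real.exp (1/5 : ℝ) ^ 5 :=
    pow_le_pow_left₀ (by norm_num) hcon.le 5
  rw [h] at h2
  have h3 : (3125/1024 : ℝ) ≤ Real.exp 1 := le_trans (by norm_num) h2
  linarith [exp_one_lt]

lemma tail_final (δ σ s m : ℝ) (hδ0 : 0 < δ) (hδ1 : δ < 1) (hσ : 0 < σ)
    (hs : Real.sqrt (2 * Real.log (1.25/δ)) - 1/(2 * Real.sqrt (2 * Real.log (1.25/δ))) ≤ s) :
    gaussianReal m ((σ^2).toNNReal) (Set.Ioi (m + σ * s)) ≤ ENNReal.ofReal δ := by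
  have h54 : (1.25 : ℝ) = 5/4 := by norm_num
  rw [h54] at hs
  have hlog : 0 < Real.log (5/4/δ) := Real.log_pos (by rw [lt_div_iff₀ hδ0]; linarith)
  set C := Real.sqrt (2 * Real.log (5/4/δ)) with hCdef
  have hCpos : 0 < C := Real.sqrt_pos.mpr (by linarith)
  have hCsq : C^2 = 2 * Real.log (5/4/δ) := Real.sq_sqrt (by linarith)
  set s₀ := C - 1/(2*C) with hs₀
  clear_value C s₀
  have hmono : gaussianReal m ((σ^2).toNNReal) (Set.Ioi (m + σ * s))
      ≤ gaussianReal m ((σ^2).toNNReal) (Set.Ioi (m + σ * s₀)) := by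
    refine measure_mono (Set.Ioi_subset_Ioi ?_)
    have : σ * s₀ ≤ σ * s := mul_le_mul_of_nonneg_left hs hσ.le
    linarith
  refine hmono.trans ?_
  rcases le_or_gt 0 s₀ with h0 | h0
  · refine (lemA m σ s₀ hσ h0).trans (ENNReal.ofReal_le_ofReal ?_)
    have he : s₀^2 = C^2 - 1 + (1/(2*C))^2 := by
      rw [hs₀]
      field_simp
      ring
    have h1 : C^2 - 1 ≤ s₀^2 := by
      rw [he]
      nlinarith [sq_nonneg (1/(2*C))]
    have hl : Real.exp (- Real.log (5/4/δ)) = δ * (4/5) := by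
      rw [Real.exp_neg, Real.exp_log (by positivity), inv_div]
      ring
    have h2 : Real.exp (-s₀^2/2) ≤ Real.exp (1/2) * (δ * (4/5)) := by
      calc Real.exp (-s₀^2/2) ≤ Real.exp ((1 - C^2)/2) := Real.exp_le_exp.2 (by linarith)
        _ = Real.exp (1/2) * Real.exp (- Real.log (5/4/δ)) := by
            rw [← Real.exp_add]
            congr 1
            rw [hCsq]
            ring
        _ = Real.exp (1/2) * (δ * (4/5)) := by rw [hl]
    have h3 : Real.exp (1/2) * (δ * (4/5)) ≤ (5/2) * (δ * (4/5)) :=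
      mul_le_mul_of_nonneg_right exp_half_le (by positivity)
    linarith
  · refine (lemB m σ s₀ hσ h0.le).trans (ENNReal.ofReal_le_ofReal ?_)
    have hCa : (79/125 : ℝ) ≤ C := by
      rw [hCdef, Real.le_sqrt (by norm_num) (by linarith)]
      have hmono2 : Real.log (5/4) ≤ Real.log (5/4/δ) := by
        refine Real.log_le_log (by norm_num) ?_
        rw [le_div_iff₀ hδ0]
        nlinarith
      nlinarith [log_54]
    have hC2 : C^2 < 1/2 := by
      have h1 : C < 1/(2*C) := by
        rw [hs₀] at h0
        linarith
      have h2 : C * (2*C) < 1 := by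
        rw [lt_div_iff₀ (by positivity)] at h1
        linarith
      nlinarith
    have hδbig : (15/16 : ℝ) ≤ δ := by
      have hlt : Real.log (5/4/δ) < 1/4 := by
        rw [hCsq] at hC2
        linarith
      have h1 : (5/4/δ) < Real.exp (1/4 : ℝ) := by
        rw [← Real.exp_log (show (0:ℝ) < 5/4/δ by positivity)]
        exact Real.exp_lt_exp.2 hlt
      have h2 : (5/4/δ) < 4/3 := lt_of_lt_of_le h1 exp_quarter_le
      rw [div_lt_iff₀ hδ0] at h2
      linarith
    have hbound : -s₀ ≤ (4/25 : ℝ) := by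
      have h1 : 1/(2*C) ≤ 1/(2*(79/125)) := by
        apply one_div_le_one_div_of_le (by norm_num)
        linarith
      rw [hs₀]
      have h2 : 1/(2*((79/125):ℝ)) ≤ 99/125 := by norm_num
      linarith
    linarith

end GaussTailAux

set_option maxHeartbeats 1600000 in
open GaussTailAux in
/-- Tail estimate for the Gaussian mechanism: under `N(x, σ²)`, the event on which the ratio
of the Gaussian densities centered at `x` and `x'` exceeds `exp ε` has probability at most `δ`. -/
theorem gaussian_privacy_loss_tail
    (ε δ Δ σ : ℝ)
    (hε : ε ∈ Set.Ioo (0 : ℝ) 1) (hδ : δ ∈ Set.Ioo (0 : ℝ) 1) (hΔ : 0 < Δ)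
    (hσ : Real.sqrt (2 * Real.log (1.25 / δ)) * Δ / ε ≤ σ)
    (x x' : ℝ) (hx : |x - x'| ≤ Δ) :
    gaussianReal x ((σ ^ 2).toNNReal)
      {z : ℝ | Real.exp ε * Real.exp (-(z - x') ^ 2 / (2 * σ ^ 2)) <
        Real.exp (-(z - x) ^ 2 / (2 * σ ^ 2))} ≤ ENNReal.ofReal δ := by
  obtain ⟨hε0, hε1⟩ := hε
  obtain ⟨hδ0, hδ1⟩ := hδ
  have hlog : 0 < Real.log (1.25/δ) := Real.log_pos (by
    rw [lt_div_iff₀ hδ0, show (1.25:ℝ) = 5/4 from by norm_num]; linarith)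
  set C := Real.sqrt (2 * Real.log (1.25/δ)) with hCdef
  have hCpos : 0 < C := Real.sqrt_pos.mpr (by linarith)
  have hσpos : 0 < σ := lt_of_lt_of_le (by positivity) hσ
  have hσε : C * Δ ≤ σ * ε := by
    rw [div_le_iff₀ hε0] at hσ
    linarith
  clear_value C
  set d := x - x' with hd
  have hdΔ : d ≤ Δ := le_of_abs_le hx
  have hdΔ' : -Δ ≤ d := neg_le_of_abs_le hx
  have hsq : (0:ℝ) < 2 * σ^2 := by positivity
  have hx'' : x' = x - d := by rw [hd]; ring
  clear_value d
  have hset : {z : ℝ | Real.exp ε * Real.exp (-(z - x') ^ 2 / (2 * σ ^ 2)) <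
        Real.exp (-(z - x) ^ 2 / (2 * σ ^ 2))}
      = {z : ℝ | 2*σ^2*ε + d*(x+x') < (2*d)*z} := by
    ext z
    simp only [Set.mem_setOf_eq, ← Real.exp_add, Real.exp_lt_exp]
    rw [← sub_pos, ← sub_pos (b := 2*σ^2*ε + d*(x+x'))]
    have hkey : -(z - x)^2 / (2*σ^2) - (ε + -(z - x')^2 / (2*σ^2))
        = ((2*d)*z - (2*σ^2*ε + d*(x+x'))) / (2*σ^2) := by
      rw [hx'']
      field_simp
      ring
    rw [hkey]
    constructor
    · intro h
      have h2 := mul_pos h hsq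
      rwa [div_mul_cancel₀ _ hsq.ne'] at h2
    · intro h
      positivity
  rw [hset]
  rcases lt_trichotomy d 0 with hdneg | hdzero | hdpos
  · -- d < 0 : the set is Iio; reflect
    have h2d : (2*d) < 0 := by linarith
    have hIio : {z : ℝ | 2*σ^2*ε + d*(x+x') < (2*d)*z}
        = Set.Iio ((2*σ^2*ε + d*(x+x'))/(2*d)) := by
      ext z
      simp only [Set.mem_setOf_eq, Set.mem_Iio]
      rw [lt_div_iff_of_neg h2d]
      constructor <;> intro h <;> nlinarith
    have hd0 : d ≠ 0 := ne_of_lt hdneg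
    have hnd0 : (-d) ≠ 0 := by simpa using hd0
    have hpt : (2*σ^2*ε + d*(x+x'))/(2*d) = x + σ * (σ*ε/d - d/(2*σ)) := by
      rw [hx'']
      field_simp
      ring
    rw [hIio, hpt, gauss_Iio_eq_Ioi]
    have hpt2 : 2*x - (x + σ * (σ*ε/d - d/(2*σ))) = x + σ * (σ*ε/(-d) - (-d)/(2*σ)) := by
      field_simp
      ring
    rw [hpt2]
    refine tail_final δ σ _ x hδ0 hδ1 hσpos ?_
    have he : 0 < -d := by linarith
    have hCd : C*(-d) ≤ C*Δ := mul_le_mul_of_nonneg_left (by linarith) hCpos.le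
    have hσεσ : σ*ε ≤ σ := by nlinarith
    have h1 : C ≤ σ*ε/(-d) := by
      rw [le_div_iff₀ he]
      linarith
    have h2 : (-d)/(2*σ) ≤ 1/(2*C) := by
      have hb : (0:ℝ) < 2*σ := by linarith
      have hb2 : (0:ℝ) < 2*C := by linarith
      rw [div_le_div_iff₀ hb hb2]
      nlinarith
    rw [← hCdef]
    linarith
  · -- d = 0 : the set is empty
    have hempty : {z : ℝ | 2*σ^2*ε + d*(x+x') < (2*d)*z} = ∅ := by
      ext z
      simp only [Set.mem_setOf_eq, Set.mem_empty_iff_false, iff_false, not_lt, hdzero]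
      nlinarith
    rw [hempty]
    simp
  · -- d > 0 : the set is Ioi
    have h2d : (0:ℝ) < 2*d := by linarith
    have hIoi : {z : ℝ | 2*σ^2*ε + d*(x+x') < (2*d)*z}
        = Set.Ioi ((2*σ^2*ε + d*(x+x'))/(2*d)) := by
      ext z
      simp only [Set.mem_setOf_eq, Set.mem_Ioi]
      rw [div_lt_iff₀ h2d]
      constructor <;> intro h <;> nlinarith
    have hd0 : d ≠ 0 := ne_of_gt hdpos
    have hpt : (2*σ^2*ε + d*(x+x'))/(2*d) = x + σ * (σ*ε/d - d/(2*σ)) := by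
      rw [hx'']
      field_simp
      ring
    rw [hIoi, hpt]
    refine tail_final δ σ _ x hδ0 hδ1 hσpos ?_
    have hCd : C*d ≤ C*Δ := mul_le_mul_of_nonneg_left hdΔ hCpos.le
    have hσεσ : σ*ε ≤ σ := by nlinarith
    have h1 : C ≤ σ*ε/d := by
      rw [le_div_iff₀ hdpos]
      linarith
    have h2 : d/(2*σ) ≤ 1/(2*C) := by
      have hb : (0:ℝ) < 2*σ := by linarith
      have hb2 : (0:ℝ) < 2*C := by linarith
      rw [div_le_div_iff₀ hb hb2]
      nlinarith
    rw [← hCdef]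
    linarith
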